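/- Let 1 ≤ k ≤ n-1. The rational function E(q) := binom(n,k)_q · (q-1)·q^n / (q^n - 1) is a polynomial in q if and only if gcd(k,n) = 1. -/

import Mathlib

open Polynomial Finset

/-- Numerator of the Gaussian binomial coefficient: `∏_{i=0}^{k-1} (1 - q^{n-i})`. -/
noncomputable def gaussNum (n k : ℕ) : Polynomial ℤ :=
  ∏ i ∈ Finset.range k, (1 - X ^ (n - i))

/-- Denominator of the Gaussian binomial coefficient: `∏_{i=1}^{k} (1 - q^i)`. -/
noncomputable def gaussDen (k : ℕ) : Polynomial ℤ :=
  ∏ i ∈ Finset.range k, (1 - X ^ (i + 1))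

private lemma rm_finset_prod {ι : Type*} (s : Finset ι) (f : ι → Polynomial ℂ)
    (h : ∀ i ∈ s, f i ≠ 0) (a : ℂ) :
    rootMultiplicity a (∏ i ∈ s, f i) = ∑ i ∈ s, rootMultiplicity a (f i) := by
  classical
  induction s using Finset.induction with
  | empty => simp [rootMultiplicity_eq_zero (by simp [IsRoot] : ¬ IsRoot (1 : Polynomial ℂ) a)]
  | @insert x s hx ih =>
    rw [Finset.prod_insert hx, Finset.sum_insert hx,
      rootMultiplicity_mul (mul_ne_zero (h x (mem_insert_self x s))
        (Finset.prod_ne_zero_iff.mpr fun i hi => h i (mem_insert_of_mem hi))),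
      ih fun i hi => h i (mem_insert_of_mem hi)]

private lemma one_sub_X_pow_ne_zero (m : ℕ) (hm : 0 < m) : (1 - X ^ m : Polynomial ℂ) ≠ 0 := by
  intro h
  have := congrArg (fun p => Polynomial.coeff p 0) h
  simp only [coeff_sub, coeff_one, coeff_X_pow] at this
  rw [if_neg (by omega : ¬ (0 = m))] at this
  simp at this

private lemma rm_one_sub_X_pow (m : ℕ) (hm : 0 < m) (ζ : ℂ) (hζ : ζ ≠ 0) :
    rootMultiplicity ζ (1 - X ^ m : Polynomial ℂ) = if ζ ^ m = 1 then 1 else 0 := by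
  have hne := one_sub_X_pow_ne_zero m hm
  split_ifs with h
  · have hroot : IsRoot (1 - X ^ m : Polynomial ℂ) ζ := by simp [IsRoot, h]
    have h1 : 0 < rootMultiplicity ζ (1 - X ^ m : Polynomial ℂ) :=
      (rootMultiplicity_pos hne).mpr hroot
    have h2 : ¬ (1 < rootMultiplicity ζ (1 - X ^ m : Polynomial ℂ)) := by
      rw [one_lt_rootMultiplicity_iff_isRoot hne]
      rintro ⟨-, hd⟩
      have : (m : ℂ) * ζ ^ (m - 1) = 0 := by
        simpa [IsRoot, derivative_X_pow] using hd
      rcases mul_eq_zero.mp this with h' | h'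
      · exact (Nat.cast_ne_zero (R := ℂ)).mpr hm.ne' h'
      · exact hζ (pow_eq_zero_iff'.mp h').1
    omega
  · exact rootMultiplicity_eq_zero (by simp [IsRoot, sub_eq_zero]; exact fun hh => h hh.symm)

private lemma card_range_dvd (k d : ℕ) (hk : 1 ≤ k) :
    #{i ∈ range k | d ∣ i} = (k - 1) / d + 1 := by
  have he : {i ∈ range k | d ∣ i} = insert 0 {i ∈ Ioc 0 (k-1) | d ∣ i} := by
    ext i
    simp only [mem_filter, mem_range, mem_insert, mem_Ioc]
    constructor
    · rintro ⟨h1, h2⟩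
      rcases Nat.eq_zero_or_pos i with rfl | hi
      · exact Or.inl rfl
      · exact Or.inr ⟨⟨hi, by omega⟩, h2⟩
    · rintro (rfl | ⟨⟨h1, h2⟩, h3⟩)
      · exact ⟨hk, dvd_zero d⟩
      · exact ⟨by omega, h3⟩
  rw [he, Finset.card_insert_of_notMem (by simp), Nat.Ioc_filter_dvd_card_eq_div]

private lemma card_range_dvd_succ (k d : ℕ) :
    #{i ∈ range k | d ∣ (i + 1)} = k / d := by
  rw [← Nat.Ioc_filter_dvd_card_eq_div k d]
  apply Finset.card_bij (fun i _ => i + 1)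
  · intro a ha
    simp only [mem_filter, mem_range] at ha
    simp only [mem_filter, mem_Ioc]
    exact ⟨⟨Nat.succ_pos a, ha.1⟩, ha.2⟩
  · intro a ha b hb h; omega
  · intro b hb
    simp only [mem_filter, mem_Ioc] at hb
    refine ⟨b - 1, ?_, by omega⟩
    simp only [mem_filter, mem_range]
    refine ⟨by omega, ?_⟩
    convert hb.2 using 1
    omega

private lemma rm_P (n k : ℕ) (hk1 : 1 ≤ k) (hkn : k ≤ n - 1) (hn : 2 ≤ n) (P : Polynomial ℤ)
    (hP : P * gaussDen k = gaussNum n k) {ζ : ℂ} {d : ℕ} (hd : IsPrimitiveRoot ζ d)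
    (hd1 : 1 ≤ d) (hdn : d ∣ n) :
    rootMultiplicity ζ (P.map (Int.castRingHom ℂ)) = if d ∣ k then 0 else 1 := by
  have hζ0 : ζ ≠ 0 := hd.ne_zero (by omega)
  have hpow : ∀ m : ℕ, ζ ^ m = 1 ↔ d ∣ m := fun m => hd.pow_eq_one_iff_dvd m
  set φ := Int.castRingHom ℂ with hφ
  have hnum_eq : (gaussNum n k).map φ = ∏ i ∈ range k, (1 - X ^ (n - i) : Polynomial ℂ) := by
    simp [gaussNum, Polynomial.map_prod]
  have hden_eq : (gaussDen k).map φ = ∏ i ∈ range k, (1 - X ^ (i + 1) : Polynomial ℂ) := by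
    simp [gaussDen, Polynomial.map_prod]
  have hfac : ∀ i ∈ range k, (1 - X ^ (n - i) : Polynomial ℂ) ≠ 0 := by
    intro i hi; rw [mem_range] at hi
    exact one_sub_X_pow_ne_zero _ (by omega)
  have hfac' : ∀ i ∈ range k, (1 - X ^ (i + 1) : Polynomial ℂ) ≠ 0 := fun i _ =>
    one_sub_X_pow_ne_zero _ (by omega)
  have hrmnum : rootMultiplicity ζ ((gaussNum n k).map φ) = (k - 1) / d + 1 := by
    rw [hnum_eq, rm_finset_prod _ _ hfac]
    have : ∀ i ∈ range k, rootMultiplicity ζ (1 - X ^ (n - i) : Polynomial ℂ)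
        = if d ∣ i then 1 else 0 := by
      intro i hi; rw [mem_range] at hi
      rw [rm_one_sub_X_pow _ (by omega) _ hζ0]
      have hiff : ζ ^ (n - i) = 1 ↔ d ∣ i := by
        rw [hpow]
        constructor
        · intro h; have := Nat.dvd_sub hdn h; rwa [Nat.sub_sub_self (by omega)] at this
        · intro h; exact Nat.dvd_sub hdn h
      simp [hiff]
    rw [Finset.sum_congr rfl this, ← Finset.card_filter, card_range_dvd k d hk1]
  have hrmden : rootMultiplicity ζ ((gaussDen k).map φ) = k / d := by
    rw [hden_eq, rm_finset_prod _ _ hfac']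
    have : ∀ i ∈ range k, rootMultiplicity ζ (1 - X ^ (i + 1) : Polynomial ℂ)
        = if d ∣ (i + 1) then 1 else 0 := by
      intro i hi
      rw [rm_one_sub_X_pow _ (by omega) _ hζ0]
      simp [hpow]
    rw [Finset.sum_congr rfl this, ← Finset.card_filter, card_range_dvd_succ k d]
  have hnum0 : (gaussNum n k).map φ ≠ 0 := by
    rw [hnum_eq]
    exact Finset.prod_ne_zero_iff.mpr hfac
  have hden0 : (gaussDen k).map φ ≠ 0 := by
    rw [hden_eq]
    exact Finset.prod_ne_zero_iff.mpr hfac'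
  have hPmul : (P.map φ) * ((gaussDen k).map φ) = (gaussNum n k).map φ := by
    rw [← Polynomial.map_mul, hP]
  have hPmapne : (P.map φ) ≠ 0 := fun h => hnum0 (by rw [← hPmul, h, zero_mul])
  have hadd : rootMultiplicity ζ (P.map φ) + rootMultiplicity ζ ((gaussDen k).map φ)
      = rootMultiplicity ζ ((gaussNum n k).map φ) := by
    rw [← hPmul, rootMultiplicity_mul (mul_ne_zero hPmapne hden0)]
  rw [hrmnum, hrmden] at hadd
  have hsucc : k / d = (k - 1) / d + if d ∣ k then 1 else 0 := by
    conv_lhs => rw [show k = (k - 1) + 1 by omega]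
    rw [Nat.succ_div]
    congr 2
    simp [show k - 1 + 1 = k by omega]
  split_ifs with h <;> simp [h] at hsucc <;> omega

/-- For `1 ≤ k ≤ n-1`, the stringy E-function
`binom(n,k)_q · (q-1)·q^n/(q^n-1)` is a polynomial iff `gcd(k,n) = 1`. -/
theorem stringy_E_polynomial_iff_coprime (n k : ℕ) (hk1 : 1 ≤ k) (hkn : k ≤ n - 1)
    (P : Polynomial ℤ) (hP : P * gaussDen k = gaussNum n k) :
    ((X : Polynomial ℤ) ^ n - 1 ∣ P * (X - 1) * X ^ n) ↔ Nat.gcd k n = 1 := by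
  have hn : 2 ≤ n := by omega
  set φ := Int.castRingHom ℂ with hφ
  have hφinj : Function.Injective φ := Int.cast_injective
  have hmonic : ((X : Polynomial ℤ) ^ n - 1).Monic := by
    simpa using monic_X_pow_sub_C (1 : ℤ) (by omega : n ≠ 0)
  have hPc : (P.map φ) ≠ 0 := by
    have hnum0 : (gaussNum n k).map φ ≠ 0 := by
      rw [show (gaussNum n k).map φ = ∏ i ∈ range k, (1 - X ^ (n - i) : Polynomial ℂ) by
        simp [gaussNum, Polynomial.map_prod]]
      exact Finset.prod_ne_zero_iff.mpr fun i hi =>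
        one_sub_X_pow_ne_zero _ (by rw [mem_range] at hi; omega)
    intro h
    exact hnum0 (by rw [← hP, Polynomial.map_mul, h, zero_mul])
  rw [← Polynomial.map_dvd_map φ hφinj hmonic]
  have hmapdvd : Polynomial.map φ ((X : Polynomial ℤ) ^ n - 1) = (X : Polynomial ℂ) ^ n - 1 := by
    simp
  have hmapQ : Polynomial.map φ (P * (X - 1) * X ^ n)
      = (P.map φ) * (X - 1) * X ^ n := by
    simp
  rw [hmapdvd, hmapQ]
  constructor
  · intro hdvd
    by_contra hg
    have hgk : Nat.gcd k n ∣ k := Nat.gcd_dvd_left k n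
    have hgn : Nat.gcd k n ∣ n := Nat.gcd_dvd_right k n
    have hg0 : Nat.gcd k n ≠ 0 := fun h => by
      have := Nat.eq_zero_of_gcd_eq_zero_right h; omega
    have hg2 : 2 ≤ Nat.gcd k n := by omega
    obtain hgprim := Complex.isPrimitiveRoot_exp (Nat.gcd k n) hg0
    set ζ := Complex.exp (2 * Real.pi * Complex.I / (Nat.gcd k n)) with hζdef
    have hrm := rm_P n k hk1 hkn hn P hP hgprim (by omega) hgn
    rw [if_pos hgk, ← hφ] at hrm
    have hnotroot : ¬ (P.map φ).IsRoot ζ := fun hr => by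
      have := (rootMultiplicity_pos hPc).mpr hr; omega
    have hζn : ζ ^ n = 1 := by
      obtain ⟨c, hc⟩ := hgn
      rw [hc, pow_mul, hgprim.pow_eq_one, one_pow]
    have hζ1 : ζ ≠ 1 := hgprim.ne_one (Nat.lt_of_lt_of_le one_lt_two hg2)
    have hζ0 : ζ ≠ 0 := fun h => by
      rw [h] at hζn; simp [zero_pow (by omega : n ≠ 0)] at hζn
    obtain ⟨q, hq⟩ := hdvd
    have := congrArg (fun p => Polynomial.eval ζ p) hq
    simp only [eval_mul, eval_sub, eval_pow, eval_X, eval_one] at this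
    rw [hζn, sub_self, zero_mul] at this
    rcases mul_eq_zero.mp this with h' | h'
    · rcases mul_eq_zero.mp h' with h'' | h''
      · exact hnotroot h''
      · exact hζ1 (sub_eq_zero.mp h'')
    · simp at h'
  · intro hgcd
    obtain hprim := Complex.isPrimitiveRoot_exp n (by omega : n ≠ 0)
    rw [X_pow_sub_one_eq_prod (by omega : 0 < n) hprim]
    apply Finset.prod_dvd_of_coprime
    · intro a _ b _ hab
      exact pairwise_coprime_X_sub_C Function.injective_id hab
    · intro ζ hζmem
      have hζn : ζ ^ n = 1 := (Polynomial.mem_nthRootsFinset (by omega) 1).mp hζmem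
      rw [dvd_iff_isRoot]
      rcases eq_or_ne ζ 1 with rfl | hζ1
      · simp [IsRoot]
      · have hd : IsPrimitiveRoot ζ (orderOf ζ) := IsPrimitiveRoot.orderOf ζ
        have hdn : orderOf ζ ∣ n := orderOf_dvd_of_pow_eq_one hζn
        have hd0 : orderOf ζ ≠ 0 := fun h => by
          rw [h] at hdn; have := Nat.eq_zero_of_zero_dvd hdn; omega
        have hd1 : orderOf ζ ≠ 1 := fun h => hζ1 (orderOf_eq_one_iff.mp h)
        have hdk : ¬ orderOf ζ ∣ k := fun h => by
          have := Nat.dvd_gcd h hdn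
          rw [hgcd] at this
          exact hd1 (Nat.dvd_one.mp this)
        have hrm := rm_P n k hk1 hkn hn P hP hd (Nat.one_le_iff_ne_zero.mpr hd0) hdn
        rw [if_neg hdk, ← hφ] at hrm
        have hroot : (P.map φ).IsRoot ζ := (rootMultiplicity_pos hPc).mp (by omega)
        simp only [IsRoot, eval_mul, eval_sub, eval_pow, eval_X, eval_one] at hroot ⊢
        rw [hroot, zero_mul, zero_mul]
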